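/- Let C ∈ ℝ^{n×2n} satisfy CJCᵀ = 0, and let K : ℝⁿ → ℝ be continuously differentiable. Then the Hamiltonian vector field f(x) = JCᵀ∇K(Cx) satisfies f applied twice gives zero in the sense that the derivative of f along its own flow vanishes: (Df)(x) · f(x) = 0 for all x; equivalently, J∇²H(x)J∇H(x) = 0 where H(x) = K(Cx). -/
import Mathlib


open Matrix

/-- Let `C ∈ ℝ^{n×2n}` satisfy `CJCᵀ = 0` and let `K : ℝⁿ → ℝ` be
continuously differentiable (with gradient `gradK` and Hessian `HK`).  Then the
Hamiltonian vector field `f(x) = JCᵀ∇K(Cx)` satisfies `(Df)(x) · f(x) = 0` for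
all `x`; equivalently `J ∇²H(x) J ∇H(x) = 0` where `H(x) = K(Cx)`,
`∇H(x) = Cᵀ gradK(Cx)` and `∇²H(x) = Cᵀ HK(Cx) C`. -/
theorem shear_field_nilpotent (n : ℕ)
    (C : Matrix (Fin n) (Fin n ⊕ Fin n) ℝ)
    (hC : C * Matrix.J (Fin n) ℝ * Cᵀ = 0)
    (K : (Fin n → ℝ) → ℝ) (gradK : (Fin n → ℝ) → Fin n → ℝ)
    (HK : (Fin n → ℝ) → Matrix (Fin n) (Fin n) ℝ)
    (hK : Differentiable ℝ K)
    (hgrad : ∀ y v, fderiv ℝ K y v = gradK y ⬝ᵥ v)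
    (hgradK : Differentiable ℝ gradK)
    (hHess : ∀ y v, fderiv ℝ gradK y v = HK y *ᵥ v)
    (hgradcont : Continuous gradK)
    (f : (Fin n ⊕ Fin n → ℝ) → Fin n ⊕ Fin n → ℝ)
    (hf : ∀ x, f x = Matrix.J (Fin n) ℝ *ᵥ (Cᵀ *ᵥ gradK (C *ᵥ x))) :
    ∀ x, fderiv ℝ f x (f x) = 0 ∧
      (Matrix.J (Fin n) ℝ * (Cᵀ * HK (C *ᵥ x) * C)) *ᵥ
        (Matrix.J (Fin n) ℝ *ᵥ (Cᵀ *ᵥ gradK (C *ᵥ x))) = 0 := by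
  intro x
  set Jm := Matrix.J (Fin n) ℝ with hJm
  -- continuous linear maps for the matrix multiplications
  let LC : ((Fin n ⊕ Fin n) → ℝ) →L[ℝ] (Fin n → ℝ) :=
    (Matrix.mulVecLin C).toContinuousLinearMap
  let LJ : (Fin n → ℝ) →L[ℝ] ((Fin n ⊕ Fin n) → ℝ) :=
    (Matrix.mulVecLin (Jm * Cᵀ)).toContinuousLinearMap
  have hLC : ∀ v, LC v = C *ᵥ v := fun v => rfl
  have hLJ : ∀ v, LJ v = (Jm * Cᵀ) *ᵥ v := fun v => rfl
  have hfe : f = fun x => LJ (gradK (LC x)) := by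
    funext z
    simp [hf, hLJ, hLC, ← Matrix.mulVec_mulVec]
  have hderiv : HasFDerivAt f
      (LJ.comp ((fderiv ℝ gradK (C *ᵥ x)).comp LC)) x := by
    rw [hfe]
    exact LJ.hasFDerivAt.comp x
      (((hgradK (C *ᵥ x)).hasFDerivAt.comp x LC.hasFDerivAt))
  have hCf : C *ᵥ f x = 0 := by
    rw [hf, Matrix.mulVec_mulVec, Matrix.mulVec_mulVec, hC, Matrix.zero_mulVec]
  constructor
  · rw [hderiv.fderiv]
    simp only [ContinuousLinearMap.comp_apply]
    have : LC (f x) = 0 := hCf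
    rw [this]
    simp
  · have hCg : C *ᵥ (Jm *ᵥ (Cᵀ *ᵥ gradK (C *ᵥ x))) = 0 := by
      rw [← hf]; exact hCf
    rw [show (Jm * (Cᵀ * HK (C *ᵥ x) * C)) = Jm * Cᵀ * HK (C *ᵥ x) * C by
      simp only [Matrix.mul_assoc]]
    rw [← Matrix.mulVec_mulVec, ← Matrix.mulVec_mulVec, ← Matrix.mulVec_mulVec, hCg]
    simp
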